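/- For every integer k ≥ 1, let w₁ = b a^k b a^{k+1} b a^{k+1} and w₂ = a^{k+1} b a^k b over the two-letter alphabet {a,b} with a < b, and let x_i = (w_i w_i) truncated to length 2|w_i| − 1 for i = 1,2. Then the overlap ov(x₁, x₂) (longest suffix of x₁ that is a prefix of x₂) has length 4k+5, and ov(x₂, x₁) has length 3k+4. -/

import Mathlib

/-- Tight example: over the alphabet `Bool` with `a = false < b = true`, let
`w₁ = b a^k b a^{k+1} b a^{k+1}`, `w₂ = a^{k+1} b a^k b` and
`xᵢ = (wᵢwᵢ)[1..2|wᵢ|−1]`. Then `|ov(x₁,x₂)| = 4k+5` and `|ov(x₂,x₁)| = 3k+4`. -/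
theorem tight_two_cycle_overlaps (k : ℕ) (hk : 1 ≤ k) :
    ∀ w₁ w₂ x₁ x₂ : List Bool,
      w₁ = [true] ++ List.replicate k false ++ [true] ++ List.replicate (k+1) false
            ++ [true] ++ List.replicate (k+1) false →
      w₂ = List.replicate (k+1) false ++ [true] ++ List.replicate k false ++ [true] →
      x₁ = (w₁ ++ w₁).take (2 * w₁.length - 1) →
      x₂ = (w₂ ++ w₂).take (2 * w₂.length - 1) →
      (∃ v : List Bool, v <:+ x₁ ∧ v <+: x₂ ∧ v.length = 4 * k + 5 ∧
        ∀ u : List Bool, u <:+ x₁ → u <+: x₂ → u.length ≤ 4 * k + 5) ∧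
      (∃ v : List Bool, v <:+ x₂ ∧ v <+: x₁ ∧ v.length = 3 * k + 4 ∧
        ∀ u : List Bool, u <:+ x₂ → u <+: x₁ → u.length ≤ 3 * k + 4) := by
  intro w₁ w₂ x₁ x₂ h1 h2 h3 h4
  set A : ℕ → List Bool := fun n => List.replicate n false with hA
  set B : List Bool := [true] with hB
  -- explicit forms of x₁, x₂
  have hx₁ : x₁ = B ++ A k ++ B ++ A (k+1) ++ B ++ A (k+1) ++ B ++ A k ++ B
      ++ A (k+1) ++ B ++ A k := by
    rw [h3, h1]
    have hlen : 2 * ([true] ++ List.replicate k false ++ [true] ++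
        List.replicate (k+1) false ++ [true] ++ List.replicate (k+1) false).length - 1
        = (B ++ A k ++ B ++ A (k+1) ++ B ++ A (k+1) ++ B ++ A k ++ B
          ++ A (k+1) ++ B ++ A k).length := by
      simp [hA, hB]; omega
    rw [hlen]
    have : ([true] ++ List.replicate k false ++ [true] ++ List.replicate (k+1) false
        ++ [true] ++ List.replicate (k+1) false) ++ ([true] ++ List.replicate k false
        ++ [true] ++ List.replicate (k+1) false ++ [true] ++ List.replicate (k+1) false)
        = (B ++ A k ++ B ++ A (k+1) ++ B ++ A (k+1) ++ B ++ A k ++ B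
          ++ A (k+1) ++ B ++ A k) ++ [false] := by
      simp [hA, hB, List.replicate_succ' ,List.append_assoc]
    rw [this, List.take_left' rfl]
  have hx₂ : x₂ = A (k+1) ++ B ++ A k ++ B ++ A (k+1) ++ B ++ A k := by
    rw [h4, h2]
    have hlen : 2 * (List.replicate (k+1) false ++ [true] ++ List.replicate k false
        ++ [true]).length - 1
        = (A (k+1) ++ B ++ A k ++ B ++ A (k+1) ++ B ++ A k).length := by
      simp [hA, hB]; omega
    rw [hlen]
    have : (List.replicate (k+1) false ++ [true] ++ List.replicate k false ++ [true])
        ++ (List.replicate (k+1) false ++ [true] ++ List.replicate k false ++ [true])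
        = (A (k+1) ++ B ++ A k ++ B ++ A (k+1) ++ B ++ A k) ++ [true] := by
      simp [hA, hB, List.append_assoc]
    rw [this, List.take_left' rfl]
  have hAlen : ∀ n, (A n).length = n := fun n => List.length_replicate (n := n) (a := false)
  have hx₂len : x₂.length = 4 * k + 5 := by simp [hx₂, hA, hB]; omega
  constructor
  · refine ⟨x₂, ?_, List.prefix_refl x₂, hx₂len, ?_⟩
    · refine ⟨B ++ A k ++ B ++ A (k+1) ++ B, ?_⟩
      rw [hx₁, hx₂]
      simp [List.append_assoc]
    · intro u _ hu
      calc u.length ≤ x₂.length := hu.length_le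
        _ = 4 * k + 5 := hx₂len
  · refine ⟨B ++ A k ++ B ++ A (k+1) ++ B ++ A k, ?_, ?_, ?_, ?_⟩
    · exact ⟨A (k+1), by rw [hx₂]; simp [List.append_assoc]⟩
    · refine ⟨A 1 ++ B ++ A k ++ B ++ A (k+1) ++ B ++ A k, ?_⟩
      rw [hx₁]
      have : A (k+1) = A k ++ A 1 := by
        simp [hA, List.replicate_succ']
      rw [this]
      simp [List.append_assoc]
    · simp [hA, hB]; omega
    · intro u hsuf hpre
      by_contra hlen
      push_neg at hlen
      -- u is nonempty, so its head is the head of x₁, which is true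
      obtain ⟨h, u', rfl⟩ : ∃ h u', u = h :: u' := by
        cases u with
        | nil => simp at hlen
        | cons h u' => exact ⟨h, u', rfl⟩
      have hhead : h = true := by
        obtain ⟨s, hs⟩ := hpre
        rw [hx₁] at hs
        have := congrArg (fun l => l[0]?) hs
        simpa [hA, hB] using this.symm
      -- from the suffix side, h sits in the initial block of a's of x₂
      obtain ⟨t, ht⟩ := hsuf
      have htlen : t.length ≤ k := by
        have hL := congrArg List.length ht
        simp only [List.length_append, List.length_cons, hx₂len] at hL
        simp only [List.length_cons] at hlen
        omega
      have hfalse : h = false := by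
        have e1 : (t ++ h :: u')[t.length]? = some h := by
          rw [List.getElem?_append_right le_rfl]
          simp
        rw [ht, hx₂] at e1
        have e2 : (A (k+1) ++ (B ++ A k ++ B ++ A (k+1) ++ B ++ A k))[t.length]?
            = some false := by
          rw [List.getElem?_append_left (by simp [hA]; omega)]
          simp [hA, Nat.lt_succ_of_le htlen]
        rw [show A (k+1) ++ B ++ A k ++ B ++ A (k+1) ++ B ++ A k
            = A (k+1) ++ (B ++ A k ++ B ++ A (k+1) ++ B ++ A k) by
          simp [List.append_assoc]] at e1
        rw [e2] at e1
        exact (Option.some_injective _ e1).symm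
      simp [hhead] at hfalse
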